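/- (Interpolant combination lemma, main case) Let l be a literal, A_1,...,A_m, B_1,...,B_o clauses, C_1,...,C_p, D_1,...,D_r conjunctions of literals, E_1 a set of clauses and E_2 a set of conjunctions of literals, none containing l or l*. Suppose I_1 satisfies: ⋀{A_1,...,A_m} ∧ ⋀E_1 → I_1 and I_1 → ⋁{C_1,...,C_p} ∨ ⋁E_2 are valid; and I_2 satisfies: ⋀{B_1,...,B_o} ∧ ⋀E_1 → I_2 and I_2 → ⋁{D_1,...,D_r} ∨ ⋁E_2 are valid. Then I = (l ∨ I_1) ∧ (l* ∨ I_2) satisfies: (A_1∨l) ∧...∧ (A_m∨l) ∧ (B_1∨l*) ∧...∧ (B_o∨l*) ∧ ⋀E_1 → I is valid, and I → (C_1∧l*) ∨...∨ (C_p∧l*) ∨ (D_1∧l) ∨...∨ (D_r∧l) ∨ ⋁E_2 is valid. -/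
import Mathlib


/-- Propositional formulas over variables indexed by naturals. -/
inductive PropForm where
  | var : Nat → PropForm
  | fls : PropForm
  | tru : PropForm
  | neg : PropForm → PropForm
  | conj : PropForm → PropForm → PropForm
  | disj : PropForm → PropForm → PropForm
deriving DecidableEq

/-- Classical Boolean evaluation of a formula under a valuation. -/
def PropForm.eval (v : Nat → Bool) : PropForm → Bool
  | .var n => v n
  | .fls => false
  | .tru => true
  | .neg A => !(A.eval v)
  | .conj A B => A.eval v && B.eval v
  | .disj A B => A.eval v || B.eval v

/-- The propositional variables occurring in a formula. -/
def PropForm.vars : PropForm → Finset Nat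
  | .var n => {n}
  | .fls => ∅
  | .tru => ∅
  | .neg A => A.vars
  | .conj A B => A.vars ∪ B.vars
  | .disj A B => A.vars ∪ B.vars

/-- A formula is valid iff true under every valuation. -/
def PropForm.Valid (A : PropForm) : Prop := ∀ v : Nat → Bool, A.eval v = true

/-- Literals: a variable or its negation. -/
inductive Lit where
  | pos : Nat → Lit
  | neg : Nat → Lit
deriving DecidableEq

/-- The complement of a literal. -/
def Lit.compl : Lit → Lit
  | .pos n => .neg n
  | .neg n => .pos n

/-- The variable of a literal. -/
def Lit.var : Lit → Nat
  | .pos n => n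
  | .neg n => n

/-- Evaluation of a literal. -/
def Lit.eval (v : Nat → Bool) : Lit → Bool
  | .pos n => v n
  | .neg n => !(v n)

/-- A literal as a formula. -/
def Lit.toForm : Lit → PropForm
  | .pos n => .var n
  | .neg n => .neg (.var n)

/-- A clause (finite set of literals read disjunctively) is satisfied by `v`. -/
def clauseSat (v : Nat → Bool) (C : Finset Lit) : Prop := ∃ l ∈ C, l.eval v = true

/-- A conjunction of literals (finite set read conjunctively) is satisfied by `v`. -/
def cubeSat (v : Nat → Bool) (C : Finset Lit) : Prop := ∀ l ∈ C, l.eval v = true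


lemma lit_toForm_eval (v : Nat → Bool) (l : Lit) : l.toForm.eval v = l.eval v := by
  cases l <;> rfl

lemma lit_compl_eval (v : Nat → Bool) (l : Lit) : l.compl.eval v = !l.eval v := by
  cases l <;> simp [Lit.compl, Lit.eval]

theorem stmt4 (l : Lit) (As Bs : List (Finset Lit)) (Cs Ds : List (Finset Lit))
    (E₁ E₂ : Finset (Finset Lit)) (I₁ I₂ : PropForm)
    (hAs : ∀ A ∈ As, l ∉ A ∧ l.compl ∉ A)
    (hBs : ∀ B ∈ Bs, l ∉ B ∧ l.compl ∉ B)
    (hCs : ∀ C ∈ Cs, l ∉ C ∧ l.compl ∉ C)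
    (hDs : ∀ D ∈ Ds, l ∉ D ∧ l.compl ∉ D)
    (hE₁ : ∀ C ∈ E₁, l ∉ C ∧ l.compl ∉ C)
    (hE₂ : ∀ C ∈ E₂, l ∉ C ∧ l.compl ∉ C)
    (hI₁l : ∀ v : Nat → Bool,
      ((∀ A ∈ As, clauseSat v A) ∧ (∀ C ∈ E₁, clauseSat v C)) → I₁.eval v = true)
    (hI₁r : ∀ v : Nat → Bool, I₁.eval v = true →
      (∃ C ∈ Cs, cubeSat v C) ∨ (∃ C ∈ E₂, cubeSat v C))
    (hI₂l : ∀ v : Nat → Bool,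
      ((∀ B ∈ Bs, clauseSat v B) ∧ (∀ C ∈ E₁, clauseSat v C)) → I₂.eval v = true)
    (hI₂r : ∀ v : Nat → Bool, I₂.eval v = true →
      (∃ D ∈ Ds, cubeSat v D) ∨ (∃ C ∈ E₂, cubeSat v C)) :
    (∀ v : Nat → Bool,
      ((∀ A ∈ As, clauseSat v (insert l A)) ∧
       (∀ B ∈ Bs, clauseSat v (insert l.compl B)) ∧
       (∀ C ∈ E₁, clauseSat v C)) →
      (PropForm.conj (PropForm.disj l.toForm I₁)
        (PropForm.disj l.compl.toForm I₂)).eval v = true) ∧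
    (∀ v : Nat → Bool,
      (PropForm.conj (PropForm.disj l.toForm I₁)
        (PropForm.disj l.compl.toForm I₂)).eval v = true →
      (∃ C ∈ Cs, cubeSat v (insert l.compl C)) ∨
      (∃ D ∈ Ds, cubeSat v (insert l D)) ∨
      (∃ C ∈ E₂, cubeSat v C)) := by
  constructor
  · intro v ⟨hA, hB, hE⟩
    simp only [PropForm.eval, Bool.and_eq_true, Bool.or_eq_true, lit_toForm_eval,
      lit_compl_eval]
    by_cases hl : l.eval v = true
    · refine ⟨Or.inl hl, Or.inr ?_⟩
      apply hI₂l v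
      refine ⟨fun B hBm => ?_, hE⟩
      obtain ⟨x, hx, hxe⟩ := hB B hBm
      rcases Finset.mem_insert.mp hx with rfl | hx
      · simp [lit_compl_eval, hl] at hxe
      · exact ⟨x, hx, hxe⟩
    · simp only [Bool.not_eq_true] at hl
      refine ⟨Or.inr ?_, Or.inl (by simp [hl])⟩
      apply hI₁l v
      refine ⟨fun A hAm => ?_, hE⟩
      obtain ⟨x, hx, hxe⟩ := hA A hAm
      rcases Finset.mem_insert.mp hx with rfl | hx
      · rw [hl] at hxe; exact absurd hxe (by simp)
      · exact ⟨x, hx, hxe⟩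
  · intro v hI
    simp only [PropForm.eval, Bool.and_eq_true, Bool.or_eq_true, lit_toForm_eval,
      lit_compl_eval] at hI
    obtain ⟨h1, h2⟩ := hI
    by_cases hl : l.eval v = true
    · rcases h2 with h2 | h2
      · simp [hl] at h2
      · rcases hI₂r v h2 with ⟨D, hD, hsat⟩ | hE2
        · refine Or.inr (Or.inl ⟨D, hD, fun x hx => ?_⟩)
          rcases Finset.mem_insert.mp hx with rfl | hx
          · exact hl
          · exact hsat x hx
        · exact Or.inr (Or.inr hE2)
    · simp only [Bool.not_eq_true] at hl
      rcases h1 with h1 | h1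
      · rw [hl] at h1; simp at h1
      · rcases hI₁r v h1 with ⟨C, hC, hsat⟩ | hE2
        · refine Or.inl ⟨C, hC, fun x hx => ?_⟩
          rcases Finset.mem_insert.mp hx with rfl | hx
          · simp [lit_compl_eval, hl]
          · exact hsat x hx
        · exact Or.inr (Or.inr hE2)
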